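/- Let Q : ℝ³ → ℝ be a continuous positive function with constant C₀ > 0 such that Q(x) ≤ C₀ e^{−|x|}/|x| for all |x| > 1, and with ∫_{|y|<1} Q(y)² dy > 0. Then there exists C₁ > 0 such that for every d ∈ ℝ³ with |d| ≥ C₁ and all θ, θ₁ ∈ ℝ: ∫_{|y|<1} | e^{iθ} Q(y) − e^{iθ₁} Q(y − d) |² dy ≥ (1/2) ∫_{|y|<1} Q(y)² dy. (Consequently, if two phase-translated copies of Q are close in L² on a unit ball, their translation parameters differ by at most C₁.) -/

import Mathlib

noncomputable section

open MeasureTheory Real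

abbrev R3 : Type := EuclideanSpace ℝ (Fin 3)

theorem separated_translates_L2_lower_bound
    (Q : R3 → ℝ) (hQcont : Continuous Q) (hQpos : ∀ x : R3, 0 < Q x)
    (C₀ : ℝ) (hC₀ : 0 < C₀)
    (hdecay : ∀ x : R3, 1 < ‖x‖ → Q x ≤ C₀ * Real.exp (-‖x‖) / ‖x‖)
    (hQL2pos : 0 < ∫ y in Metric.ball (0 : R3) 1, (Q y) ^ 2) :
    ∃ C₁ > (0 : ℝ), ∀ (d : R3) (θ θ₁ : ℝ), C₁ ≤ ‖d‖ →
      (1 / 2) * (∫ y in Metric.ball (0 : R3) 1, (Q y) ^ 2)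
        ≤ ∫ y in Metric.ball (0 : R3) 1,
            ‖Complex.exp ((θ : ℂ) * Complex.I) * (Q y : ℂ)
              - Complex.exp ((θ₁ : ℂ) * Complex.I) * (Q (y - d) : ℂ)‖ ^ 2 := by
  set I := ∫ y in Metric.ball (0 : R3) 1, (Q y) ^ 2 with hIdef
  set M := ∫ y in Metric.ball (0 : R3) 1, Q y with hMdef
  have hMnn : 0 ≤ M :=
    setIntegral_nonneg measurableSet_ball (fun y _ => (hQpos y).le)
  set ε := I / (4 * (M + 1)) with hεdef
  have hεpos : 0 < ε := div_pos hQL2pos (by linarith)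
  refine ⟨max 2 (1 + Real.log (C₀ / ε)),
    lt_of_lt_of_le (by norm_num) (le_max_left _ _), ?_⟩
  intro d θ θ₁ hd
  set C₁ := max 2 (1 + Real.log (C₀ / ε)) with hC₁def
  have h2C₁ : (2:ℝ) ≤ C₁ := le_max_left _ _
  -- Q (y - d) is small on the ball
  have hkey : ∀ y ∈ Metric.ball (0:R3) 1, Q (y - d) ≤ ε := by
    intro y hy
    have hy1 : ‖y‖ < 1 := by simpa using hy
    have hnorm : C₁ - 1 < ‖y - d‖ := by
      have h1 : ‖d‖ - ‖y‖ ≤ ‖d - y‖ := norm_sub_norm_le d y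
      have h2 : ‖d - y‖ = ‖y - d‖ := norm_sub_rev d y
      linarith
    have h1lt : 1 < ‖y - d‖ := by linarith
    have hdec := hdecay (y - d) h1lt
    have hstep1 : C₀ * Real.exp (-‖y - d‖) / ‖y - d‖ ≤ C₀ * Real.exp (-‖y - d‖) := by
      apply div_le_self (by positivity) (by linarith)
    have hstep2 : C₀ * Real.exp (-‖y - d‖) ≤ C₀ * Real.exp (1 - C₁) := by
      apply mul_le_mul_of_nonneg_left _ hC₀.le
      apply Real.exp_le_exp.mpr; linarith
    have hstep3 : C₀ * Real.exp (1 - C₁) ≤ ε := by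
      have hlog : 1 + Real.log (C₀ / ε) ≤ C₁ := le_max_right _ _
      have hq : (0:ℝ) < ε / C₀ := div_pos hεpos hC₀
      have h3 : Real.exp (1 - C₁) ≤ Real.exp (Real.log (ε / C₀)) := by
        apply Real.exp_le_exp.mpr
        have : Real.log (C₀ / ε) = - Real.log (ε / C₀) := by
          rw [← Real.log_inv]; congr 1; field_simp
        linarith [this ▸ hlog]
      rw [Real.exp_log hq] at h3
      calc C₀ * Real.exp (1 - C₁) ≤ C₀ * (ε / C₀) :=
            mul_le_mul_of_nonneg_left h3 hC₀.le
        _ = ε := by field_simp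
    linarith
  -- pointwise lower bound
  have hpt : ∀ y ∈ Metric.ball (0:R3) 1,
      (Q y) ^ 2 - 2 * ε * Q y ≤
      ‖Complex.exp ((θ : ℂ) * Complex.I) * (Q y : ℂ)
        - Complex.exp ((θ₁ : ℂ) * Complex.I) * (Q (y - d) : ℂ)‖ ^ 2 := by
    intro y hy
    set a := Complex.exp ((θ : ℂ) * Complex.I) * (Q y : ℂ)
    set b := Complex.exp ((θ₁ : ℂ) * Complex.I) * (Q (y - d) : ℂ)
    have hna : ‖a‖ = Q y := by
      simp [a, map_mul, Complex.norm_exp_ofReal_mul_I,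
        Complex.norm_real, Real.norm_eq_abs, abs_of_pos (hQpos y)]
    have hnb : ‖b‖ = Q (y - d) := by
      simp [b, map_mul, Complex.norm_exp_ofReal_mul_I,
        Complex.norm_real, Real.norm_eq_abs, abs_of_pos (hQpos (y - d))]
    have habs : |‖a‖ - ‖b‖| ≤ ‖a - b‖ := abs_norm_sub_norm_le a b
    have hsq : (‖a‖ - ‖b‖) ^ 2 ≤ ‖a - b‖ ^ 2 := by
      rw [← sq_abs]
      exact pow_le_pow_left₀ (abs_nonneg _) habs 2
    have hb_small : Q (y - d) ≤ ε := hkey y hy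
    have hQynn : 0 ≤ Q y := (hQpos y).le
    nlinarith [hsq, hnb ▸ (hQpos (y-d)).le]
  -- integrability
  have hQint : IntegrableOn Q (Metric.ball (0:R3) 1) volume :=
    (hQcont.continuousOn.integrableOn_compact (isCompact_closedBall (0:R3) 1)).mono_set Metric.ball_subset_closedBall
  have hQ2int : IntegrableOn (fun y => (Q y)^2) (Metric.ball (0:R3) 1) volume :=
    ((hQcont.pow 2).continuousOn.integrableOn_compact (isCompact_closedBall (0:R3) 1)).mono_set Metric.ball_subset_closedBall
  have hfcont : Continuous (fun y : R3 =>
      ‖Complex.exp ((θ : ℂ) * Complex.I) * (Q y : ℂ)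
        - Complex.exp ((θ₁ : ℂ) * Complex.I) * (Q (y - d) : ℂ)‖ ^ 2) := by
    apply Continuous.pow
    apply Continuous.norm
    exact (continuous_const.mul (Complex.continuous_ofReal.comp hQcont)).sub
      (continuous_const.mul (Complex.continuous_ofReal.comp
        (hQcont.comp (continuous_id.sub continuous_const))))
  have hfint : IntegrableOn (fun y : R3 =>
      ‖Complex.exp ((θ : ℂ) * Complex.I) * (Q y : ℂ)
        - Complex.exp ((θ₁ : ℂ) * Complex.I) * (Q (y - d) : ℂ)‖ ^ 2)
      (Metric.ball (0:R3) 1) volume := (hfcont.continuousOn.integrableOn_compact (isCompact_closedBall (0:R3) 1)).mono_set Metric.ball_subset_closedBall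
  have hgint : IntegrableOn (fun y => (Q y)^2 - 2 * ε * Q y)
      (Metric.ball (0:R3) 1) volume := hQ2int.sub (hQint.const_mul _)
  have hmono : ∫ y in Metric.ball (0:R3) 1, ((Q y)^2 - 2 * ε * Q y) ≤
      ∫ y in Metric.ball (0:R3) 1,
        ‖Complex.exp ((θ : ℂ) * Complex.I) * (Q y : ℂ)
          - Complex.exp ((θ₁ : ℂ) * Complex.I) * (Q (y - d) : ℂ)‖ ^ 2 :=
    setIntegral_mono_on hgint hfint measurableSet_ball hpt
  have hsplit : ∫ y in Metric.ball (0:R3) 1, ((Q y)^2 - 2 * ε * Q y)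
      = I - 2 * ε * M := by
    rw [integral_sub hQ2int (hQint.const_mul _), integral_const_mul]
  rw [hsplit] at hmono
  have hfinal : (1/2) * I ≤ I - 2 * ε * M := by
    have : 2 * ε * M = I * (M / (2 * (M + 1))) := by
      rw [hεdef]; field_simp; ring
    rw [this]
    have hfrac : M / (2 * (M + 1)) ≤ 1 / 2 := by
      rw [div_le_div_iff₀ (by linarith) (by norm_num)]; linarith
    nlinarith
  linarith
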